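/- arXiv:2510.14432 — 2 statements merged into one kernel-verified Lean document; each statement's English description precedes it below -/
import Mathlib

section
/- For every real p > 1 there exists a constant C > 0 such that for all vectors x, y in ℝ^N, ⟨|x|^{p-2} x − |y|^{p-2} y, x − y⟩ ≥ C (|x| + |y|)^{p-2} |x − y|^2. -/
open InnerProductSpace

private lemma pLap_shift (p : ℝ) (hp : 1 < p) {c : ℝ} (hc : 0 ≤ c) :
    c ^ (p - 2) * c = c ^ (p - 1) := by
  rcases eq_or_lt_of_le hc with h | h
  · rw [← h, Real.zero_rpow (by linarith : p - 1 ≠ 0), mul_zero]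
  · rw [show p - 1 = (p - 2) + 1 by ring, Real.rpow_add_one h.ne']

private lemma pLap_scalar1 (p : ℝ) (hp : 1 < p) : ∀ a b : ℝ, 0 ≤ a → 0 ≤ b →
    min (p-1) 1 * 2^(1-p) * (a+b)^(p-2) * (a-b)^2 ≤ (a^(p-1) - b^(p-1)) * (a-b) := by
  have hmin0 : 0 < min (p-1) 1 := lt_min (by linarith) one_pos
  have h2p : (0:ℝ) < 2^(1-p) := Real.rpow_pos_of_pos two_pos _
  have h2p1 : (2:ℝ)^(1-p) ≤ 1 := Real.rpow_le_one_of_one_le_of_nonpos one_le_two (by linarith)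
  have main : ∀ a b : ℝ, 0 ≤ b → b ≤ a →
      min (p-1) 1 * 2^(1-p) * (a+b)^(p-2) * (a-b) ≤ a^(p-1) - b^(p-1) := by
    intro a b hb hba
    have ha : 0 ≤ a := hb.trans hba
    rcases eq_or_lt_of_le ha with h0 | ha'
    · have hb0 : b = 0 := le_antisymm (hba.trans h0.symm.le) hb
      rw [← h0, hb0]
      norm_num
    rcases le_or_gt 2 p with h2 | h2
    · -- p ≥ 2
      have h1 : b^(p-2) ≤ a^(p-2) := Real.rpow_le_rpow hb hba (by linarith)
      have hbb : b^(p-1) = b^(p-2) * b := (pLap_shift p hp hb).symm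
      have haa : a^(p-1) = a^(p-2) * a := (pLap_shift p hp ha).symm
      have h2' : b^(p-2) * b ≤ a^(p-2) * b := mul_le_mul_of_nonneg_right h1 hb
      have h4 : 2^(1-p) * (a+b)^(p-2) ≤ a^(p-2) := by
        have e1 : ((a+b)/2)^(p-2) ≤ a^(p-2) :=
          Real.rpow_le_rpow (by linarith) (by linarith) (by linarith)
        have e2 : ((a+b)/2)^(p-2) = (a+b)^(p-2) / 2^(p-2) :=
          Real.div_rpow (by linarith) (by norm_num) _
        have e3 : (2:ℝ)^(1-p) ≤ 2^(-(p-2)) :=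
          Real.rpow_le_rpow_of_exponent_le one_le_two (by linarith)
        have e4 : (2:ℝ)^(-(p-2)) = (2^(p-2))⁻¹ := Real.rpow_neg (by norm_num) _
        have h2pos : (0:ℝ) < 2^(p-2) := Real.rpow_pos_of_pos two_pos _
        have hab : (0:ℝ) ≤ (a+b)^(p-2) := Real.rpow_nonneg (by linarith) _
        calc 2^(1-p) * (a+b)^(p-2) ≤ (2^(p-2))⁻¹ * (a+b)^(p-2) := by
              apply mul_le_mul_of_nonneg_right _ hab
              rw [← e4]; exact e3
          _ = (a+b)^(p-2) / 2^(p-2) := by ring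
          _ ≤ a^(p-2) := e2 ▸ e1
      have h5 : min (p-1) 1 * (2^(1-p) * (a+b)^(p-2)) ≤ 1 * a^(p-2) := by
        apply mul_le_mul (min_le_right _ _) h4 (by positivity) (by norm_num)
      nlinarith [mul_le_mul_of_nonneg_right h5 (sub_nonneg.2 hba)]
    · -- 1 < p < 2
      have hgm : b^(p-1) * a^(2-p) ≤ (p-1)*b + (2-p)*a :=
        Real.geom_mean_le_arith_mean2_weighted (by linarith) (by linarith) hb ha (by ring)
      have hainv : a^(2-p) * a^(p-2) = 1 := by
        rw [← Real.rpow_add ha']; norm_num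
      have hber : b^(p-1) ≤ ((p-1)*b + (2-p)*a) * a^(p-2) := by
        have := mul_le_mul_of_nonneg_right hgm
          (le_of_lt (Real.rpow_pos_of_pos ha' (p-2)))
        calc b^(p-1) = b^(p-1) * (a^(2-p) * a^(p-2)) := by rw [hainv, mul_one]
          _ = b^(p-1) * a^(2-p) * a^(p-2) := by ring
          _ ≤ ((p-1)*b + (2-p)*a) * a^(p-2) := this
      have haa : a^(p-1) = a^(p-2) * a := (pLap_shift p hp ha).symm
      -- so a^(p-1) - b^(p-1) ≥ (p-1) * a^(p-2) * (a-b)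
      have h5 : (a+b)^(p-2) ≤ a^(p-2) := Real.rpow_le_rpow_of_nonpos ha' (by linarith) (by linarith)
      have h6 : min (p-1) 1 * 2^(1-p) ≤ p-1 := by
        calc min (p-1) 1 * 2^(1-p) ≤ (p-1) * 1 :=
              mul_le_mul (min_le_left _ _) h2p1 h2p.le (by linarith)
          _ = p-1 := mul_one _
      have hab : (0:ℝ) ≤ (a+b)^(p-2) := Real.rpow_nonneg (by linarith) _
      have hapos : (0:ℝ) < a^(p-2) := Real.rpow_pos_of_pos ha' _
      nlinarith [mul_le_mul_of_nonneg_right (mul_le_mul h6 h5 hab (by linarith))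
        (sub_nonneg.2 hba), sub_nonneg.2 hba]
  intro a b ha hb
  rcases le_total b a with hba | hba
  · nlinarith [mul_le_mul_of_nonneg_right (main a b hb hba) (sub_nonneg.2 hba)]
  · have := mul_le_mul_of_nonneg_right (main b a ha hba) (sub_nonneg.2 hba)
    have hcomm : b + a = a + b := by ring
    rw [hcomm] at this
    nlinarith [this]

private lemma pLap_scalar2 (p : ℝ) (hp : 1 < p) : ∀ a b : ℝ, 0 ≤ a → 0 ≤ b →
    min (p-1) 1 * 2^(1-p) * (a+b)^(p-2) * (a+b)^2 ≤ (a^(p-1) + b^(p-1)) * (a+b) := by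
  have hmin1 : min (p-1) 1 ≤ 1 := min_le_right _ _
  have hmin0 : 0 < min (p-1) 1 := lt_min (by linarith) one_pos
  have main : ∀ a b : ℝ, 0 ≤ b → b ≤ a →
      min (p-1) 1 * 2^(1-p) * (a+b)^(p-2) * (a+b)^2 ≤ (a^(p-1) + b^(p-1)) * (a+b) := by
    intro a b hb hba
    have ha : 0 ≤ a := hb.trans hba
    rcases eq_or_lt_of_le ha with h0 | ha'
    · have hb0 : b = 0 := le_antisymm (hba.trans h0.symm.le) hb
      rw [← h0, hb0]
      norm_num
    · have habpos : (0:ℝ) < a + b := by linarith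
      -- (a+b)^(p-2)*(a+b)^2 = (a+b)^(p-1)*(a+b)
      have e0 : (a+b)^(p-2) * (a+b)^2 = (a+b)^(p-1) * (a+b) := by
        rw [sq, ← mul_assoc, pLap_shift p hp habpos.le]
      -- 2^(1-p) * (a+b)^(p-1) ≤ a^(p-1)
      have e1 : ((a+b)/2)^(p-1) ≤ a^(p-1) :=
        Real.rpow_le_rpow (by linarith) (by linarith) (by linarith)
      have e2 : ((a+b)/2)^(p-1) = (a+b)^(p-1) / 2^(p-1) :=
        Real.div_rpow (by linarith) (by norm_num) _
      have e4 : (2:ℝ)^(1-p) = (2^(p-1))⁻¹ := by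
        rw [show (1-p) = -(p-1) by ring, Real.rpow_neg (by norm_num)]
      have h4 : 2^(1-p) * (a+b)^(p-1) ≤ a^(p-1) := by
        rw [e4]
        have : (2^(p-1):ℝ)⁻¹ * (a+b)^(p-1) = (a+b)^(p-1) / 2^(p-1) := by ring
        rw [this, ← e2]; exact e1
      have hbp : (0:ℝ) ≤ b^(p-1) := Real.rpow_nonneg hb _
      have habp : (0:ℝ) ≤ (a+b)^(p-1) := Real.rpow_nonneg habpos.le _
      have h2p : (0:ℝ) < 2^(1-p) := Real.rpow_pos_of_pos two_pos _
      have h5 : min (p-1) 1 * (2^(1-p) * (a+b)^(p-1)) ≤ 1 * a^(p-1) :=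
        mul_le_mul hmin1 h4 (by positivity) (by norm_num)
      have e0' : min (p-1) 1 * 2^(1-p) * (a+b)^(p-2) * (a+b)^2
          = min (p-1) 1 * (2^(1-p) * (a+b)^(p-1)) * (a+b) := by
        rw [mul_assoc (min (p-1) 1 * 2^(1-p)), e0]; ring
      rw [e0']
      calc min (p-1) 1 * (2^(1-p) * (a+b)^(p-1)) * (a+b)
          ≤ 1 * a^(p-1) * (a+b) := mul_le_mul_of_nonneg_right h5 habpos.le
        _ ≤ (a^(p-1) + b^(p-1)) * (a+b) := by nlinarith [mul_nonneg hbp habpos.le]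
  intro a b ha hb
  rcases le_total b a with hba | hba
  · exact main a b hb hba
  · have := main b a ha hba
    have hcomm : b + a = a + b := by ring
    rw [hcomm] at this
    nlinarith [this]

private lemma pLap_affine {A B s c : ℝ} (h1 : 0 ≤ A + B*c) (h2 : 0 ≤ A - B*c)
    (h3 : |s| ≤ c) : 0 ≤ A + B*s := by
  obtain ⟨h4, h5⟩ := abs_le.mp h3
  rcases le_total 0 B with hB | hB
  · nlinarith
  · nlinarith

private lemma pLap_key (p : ℝ) (hp : 1 < p) {a b s : ℝ} (ha : 0 ≤ a) (hb : 0 ≤ b)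
    (hs : |s| ≤ a * b) :
    min (p-1) 1 * 2^(1-p) * (a+b)^(p-2) * (a^2 - 2*s + b^2) ≤
      a^(p-2) * a^2 + b^(p-2) * b^2 - (a^(p-2) + b^(p-2)) * s := by
  set K := min (p-1) 1 * 2^(1-p) * (a+b)^(p-2) with hK
  set α := a^(p-2) with hα
  set β := b^(p-2) with hβ
  have hua : α * a = a^(p-1) := pLap_shift p hp ha
  have hvb : β * b = b^(p-1) := pLap_shift p hp hb
  have ea : α * a^2 = a^(p-1) * a := by rw [sq, ← mul_assoc, hua]
  have eb : β * b^2 = b^(p-1) * b := by rw [sq, ← mul_assoc, hvb]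
  have eab : α * (a*b) = a^(p-1) * b := by rw [← mul_assoc, hua]
  have ebb : β * (a*b) = b^(p-1) * a := by rw [show a*b = b*a by ring, ← mul_assoc, hvb]
  have E1 := pLap_scalar1 p hp a b ha hb
  have E2 := pLap_scalar2 p hp a b ha hb
  have h1 : 0 ≤ (α * a^2 + β * b^2 - K*(a^2+b^2)) + (2*K - α - β)*(a*b) := by
    nlinarith [E1, ea, eb, eab, ebb]
  have h2 : 0 ≤ (α * a^2 + β * b^2 - K*(a^2+b^2)) - (2*K - α - β)*(a*b) := by
    nlinarith [E2, ea, eb, eab, ebb]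
  have := pLap_affine h1 h2 hs
  nlinarith [this]

/-- Monotonicity of the `p`-Laplacian vector field for `p > 1`:
`⟨|x|^{p-2} x − |y|^{p-2} y, x − y⟩ ≥ C (|x| + |y|)^{p-2} |x − y|²`. -/
theorem pLaplacian_monotonicity (N : ℕ) (p : ℝ) (hp : 1 < p) :
    ∃ C : ℝ, 0 < C ∧ ∀ x y : EuclideanSpace ℝ (Fin N),
      C * (‖x‖ + ‖y‖) ^ (p - 2) * ‖x - y‖ ^ 2 ≤
        inner ℝ ((‖x‖ ^ (p - 2) • x : EuclideanSpace ℝ (Fin N)) - ‖y‖ ^ (p - 2) • y)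
          (x - y) := by
  refine ⟨min (p-1) 1 * 2^(1-p), mul_pos (lt_min (by linarith) one_pos)
    (Real.rpow_pos_of_pos two_pos _), fun x y => ?_⟩
  have hkey := pLap_key p hp (norm_nonneg x) (norm_nonneg y) (abs_real_inner_le_norm x y)
  have e : (inner ℝ ((‖x‖ ^ (p - 2) • x : EuclideanSpace ℝ (Fin N)) - ‖y‖ ^ (p - 2) • y)
      (x - y) : ℝ) =
      ‖x‖^(p-2) * ‖x‖^2 + ‖y‖^(p-2) * ‖y‖^2
        - (‖x‖^(p-2) + ‖y‖^(p-2)) * (inner ℝ x y : ℝ) := by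
    simp only [inner_sub_left, inner_sub_right, real_inner_smul_left]
    rw [real_inner_self_eq_norm_sq, real_inner_self_eq_norm_sq, real_inner_comm y x]
    ring
  have en : ‖x - y‖^2 = ‖x‖^2 - 2*(inner ℝ x y : ℝ) + ‖y‖^2 := norm_sub_sq_real x y
  rw [e, en]
  exact hkey
end

section
/- For every real p > 1 there exists a constant C > 0 such that for all vectors x, y in ℝ^N, the norm of |x|^{p-2} x − |y|^{p-2} y is at most C (|x| + |y|)^{p-2} |x − y|. -/
set_option maxHeartbeats 1000000
open Real

lemma rpow_mvt (t : ℝ) {a b : ℝ} (hb : 0 < b) (hba : b ≤ a) :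
    |a ^ t - b ^ t| ≤ |t| * max (a ^ (t-1)) (b ^ (t-1)) * (a - b) := by
  set M := max (a ^ (t-1)) (b ^ (t-1)) with hM
  have h := Convex.norm_image_sub_le_of_norm_hasDerivWithin_le
    (f := fun s : ℝ => s ^ t) (f' := fun s : ℝ => t * s ^ (t-1)) (s := Set.Icc b a)
    (C := |t| * M)
    (fun s hs => ((Real.hasDerivAt_rpow_const (Or.inl (ne_of_gt (hb.trans_le hs.1)))).hasDerivWithinAt))
    (fun s hs => by
      have hs0 : 0 < s := hb.trans_le hs.1
      have : s ^ (t-1) ≤ M := by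
        rcases le_or_gt 0 (t-1) with h1 | h1
        · exact le_max_of_le_left (Real.rpow_le_rpow hs0.le hs.2 h1)
        · exact le_max_of_le_right (Real.rpow_le_rpow_of_nonpos hb hs.1 h1.le)
      have hs1 : 0 ≤ s ^ (t-1) := Real.rpow_nonneg hs0.le _
      calc ‖t * s ^ (t-1)‖ = |t| * s ^ (t-1) := by
            rw [norm_mul, Real.norm_eq_abs, Real.norm_eq_abs, abs_of_nonneg hs1]
        _ ≤ |t| * M := by gcongr)
    (convex_Icc b a) (Set.left_mem_Icc.2 hba) (Set.right_mem_Icc.2 hba)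
  simpa [abs_of_nonneg (sub_nonneg.2 hba)] using h

lemma pLap_key_s2 (N : ℕ) (p : ℝ) (hp : 1 < p) (x y : EuclideanSpace ℝ (Fin N))
    (hba : ‖y‖ ≤ ‖x‖) :
    ‖(‖x‖ ^ (p - 2) • x : EuclideanSpace ℝ (Fin N)) - ‖y‖ ^ (p - 2) • y‖ ≤
      (2 : ℝ) ^ |p-2| * (4 + |p-2| * 2 ^ |p-2-1|) * (‖x‖ + ‖y‖) ^ (p - 2) * ‖x - y‖ := by
  by_cases hx0 : x = 0
  · have hy0 : y = 0 := norm_le_zero_iff.1 (by simpa [hx0] using hba)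
    simp [hx0, hy0]
  set t := p - 2 with ht
  set a := ‖x‖ with ha
  set b := ‖y‖ with hb
  set d := ‖x - y‖ with hd
  have hb0 : (0:ℝ) ≤ b := norm_nonneg _
  have hd0 : (0:ℝ) ≤ d := norm_nonneg _
  have hC1 : (1:ℝ) ≤ 2 ^ |t| := Real.one_le_rpow one_le_two (abs_nonneg _)
  have hC1' : (1:ℝ) ≤ 2 ^ |t-1| := Real.one_le_rpow one_le_two (abs_nonneg _)
  have ha0 : (0:ℝ) < a := norm_pos_iff.2 hx0
  have hab0 : (0:ℝ) < a + b := by linarith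
  have hK : a ^ t ≤ 2 ^ |t| * (a + b) ^ t := by
    rcases le_or_gt 0 t with h1 | h1
    · have h2 : a ^ t ≤ (a+b)^t := Real.rpow_le_rpow ha0.le (by linarith) h1
      have h3 : (0:ℝ) ≤ (a+b)^t := Real.rpow_nonneg hab0.le _
      nlinarith
    · have h2 : (2*a) ^ t ≤ (a+b)^t :=
        Real.rpow_le_rpow_of_nonpos hab0 (by linarith) h1.le
      have h3 : (2*a) ^ t = 2 ^ t * a ^ t := Real.mul_rpow (by norm_num) ha0.le
      have h4 : (2:ℝ) ^ |t| * 2 ^ t = 1 := by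
        rw [abs_of_neg h1, ← Real.rpow_add (by norm_num)]
        simp
      have h5 : (0:ℝ) < 2 ^ |t| := Real.rpow_pos_of_pos (by norm_num) _
      calc a ^ t = 2 ^ |t| * (2^t * a^t) := by rw [← mul_assoc, h4, one_mul]
        _ = 2 ^ |t| * (2*a)^t := by rw [h3]
        _ ≤ 2 ^ |t| * (a+b)^t := by gcongr
  have hat0 : (0:ℝ) ≤ a ^ t := Real.rpow_nonneg ha0.le _
  have habt0 : (0:ℝ) ≤ (a+b) ^ t := Real.rpow_nonneg hab0.le _
  have habd : a - b ≤ d := le_trans (le_abs_self _) (abs_norm_sub_norm_le x y)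
  rcases le_or_gt a (2*d) with hA | hB
  · -- case A : a ≤ 2d
    have l1 : ‖(a ^ t • x : EuclideanSpace ℝ (Fin N)) - b ^ t • y‖ ≤ a^t * a + b^t * b := by
      calc ‖(a ^ t • x : EuclideanSpace ℝ (Fin N)) - b ^ t • y‖
          ≤ ‖(a^t • x : EuclideanSpace ℝ (Fin N))‖ + ‖(b^t • y : EuclideanSpace ℝ (Fin N))‖ :=
            norm_sub_le _ _
        _ = a^t * a + b^t * b := by
            rw [norm_smul, norm_smul, Real.norm_eq_abs, Real.norm_eq_abs,
              abs_of_nonneg hat0, abs_of_nonneg (Real.rpow_nonneg hb0 _)]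
    have l2 : b ^ t * b ≤ a ^ t * a := by
      rcases eq_or_lt_of_le hb0 with h | h
      · rw [← h, mul_zero]; positivity
      · have : b ^ (t+1) ≤ a ^ (t+1) := Real.rpow_le_rpow hb0 hba (by rw [ht]; linarith)
        rwa [Real.rpow_add_one (ne_of_gt h), Real.rpow_add_one (ne_of_gt ha0)] at this
    have l3 : a ^ t * a ≤ a ^ t * (2 * d) := by gcongr
    have l4 : a ^ t * (2*d) ≤ 2 ^ |t| * (a+b)^t * (2*d) := by
      have h6 : (0:ℝ) ≤ 2 * d := by linarith
      exact mul_le_mul_of_nonneg_right hK h6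
    have hfinal : ‖(a ^ t • x : EuclideanSpace ℝ (Fin N)) - b ^ t • y‖
        ≤ 4 * (2 ^ |t| * (a+b)^t) * d := by nlinarith
    have hcoef : 4 * (2 ^ |t| * (a+b)^t) * d ≤ 2 ^ |t| * (4 + |t| * 2 ^ |t-1|) * (a+b)^t * d := by
      have h5 : (0:ℝ) ≤ |t| * 2 ^ |t-1| := by positivity
      have h12 : (0:ℝ) < (2:ℝ) ^ |t| := Real.rpow_pos_of_pos (by norm_num) _
      nlinarith [mul_nonneg (mul_nonneg h12.le habt0) hd0,
        mul_nonneg (mul_nonneg (mul_nonneg h5 h12.le) habt0) hd0]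
    calc _ ≤ 4 * (2 ^ |t| * (a+b)^t) * d := hfinal
      _ ≤ _ := hcoef
  · -- case B : 2d < a
    have hblow : a / 2 < b := by linarith
    have hb0' : (0:ℝ) < b := by linarith
    have decomp : (a ^ t • x : EuclideanSpace ℝ (Fin N)) - b ^ t • y
        = a ^ t • (x - y) + (a ^ t - b ^ t) • y := by
      rw [smul_sub, sub_smul]; abel
    have l1 : ‖(a ^ t • x : EuclideanSpace ℝ (Fin N)) - b ^ t • y‖
        ≤ a ^ t * d + |a ^ t - b ^ t| * b := by
      rw [decomp]
      calc ‖(a ^ t • (x-y) : EuclideanSpace ℝ (Fin N)) + (a^t - b^t) • y‖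
          ≤ ‖(a ^ t • (x-y) : EuclideanSpace ℝ (Fin N))‖ + ‖((a^t - b^t) • y : EuclideanSpace ℝ (Fin N))‖ := norm_add_le _ _
        _ = a ^ t * d + |a^t - b^t| * b := by
            rw [norm_smul, norm_smul, Real.norm_eq_abs, Real.norm_eq_abs, abs_of_nonneg hat0]
    have hat1 : (0:ℝ) ≤ a ^ (t-1) := Real.rpow_nonneg ha0.le _
    have hMbound : max (a ^ (t-1)) (b ^ (t-1)) ≤ 2 ^ |t-1| * a ^ (t-1) := by
      apply max_le
      · nlinarith
      · rcases le_or_gt 0 (t-1) with h1 | h1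
        · have h2 : b ^ (t-1) ≤ a ^ (t-1) := Real.rpow_le_rpow hb0 hba h1
          nlinarith
        · have h2 : b ^ (t-1) ≤ (a/2) ^ (t-1) :=
            Real.rpow_le_rpow_of_nonpos (by linarith) hblow.le h1.le
          have h3 : (a/2) ^ (t-1) = a ^ (t-1) / 2 ^ (t-1) :=
            Real.div_rpow ha0.le (by norm_num : (0:ℝ) ≤ 2) (t-1)
          have h4 : (2:ℝ) ^ |t-1| * 2 ^ (t-1) = 1 := by
            rw [abs_of_neg h1, ← Real.rpow_add (by norm_num)]; simp
          have h6 : (2:ℝ) ^ |t-1| = ((2:ℝ) ^ (t-1))⁻¹ := eq_inv_of_mul_eq_one_left h4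
          calc b ^ (t-1) ≤ (a/2) ^ (t-1) := h2
            _ = a ^ (t-1) / 2 ^ (t-1) := h3
            _ = 2 ^ |t-1| * a ^ (t-1) := by rw [div_eq_mul_inv, ← h6, mul_comm]
    have l2 : |a ^ t - b ^ t| * b ≤ |t| * 2 ^ |t-1| * a ^ t * d := by
      have hm := rpow_mvt t hb0' hba
      have h6 : (0:ℝ) ≤ |t| * (2 ^ |t-1| * a ^ (t-1)) := by positivity
      have step1 : |a ^ t - b ^ t| ≤ |t| * (2 ^ |t-1| * a ^ (t-1)) * (a - b) := by
        calc |a ^ t - b ^ t| ≤ |t| * max (a ^ (t-1)) (b ^ (t-1)) * (a - b) := hm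
          _ ≤ |t| * (2 ^ |t-1| * a ^ (t-1)) * (a - b) := by
              have h7 : (0:ℝ) ≤ a - b := by linarith
              gcongr
      have step2 : |a ^ t - b ^ t| * b ≤ (|t| * (2 ^ |t-1| * a ^ (t-1)) * d) * a := by
        calc |a ^ t - b ^ t| * b
            ≤ (|t| * (2 ^ |t-1| * a ^ (t-1)) * (a - b)) * b :=
              mul_le_mul_of_nonneg_right step1 hb0
          _ ≤ (|t| * (2 ^ |t-1| * a ^ (t-1)) * d) * a :=
              mul_le_mul (mul_le_mul_of_nonneg_left habd h6) hba hb0 (by positivity)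
      have hrw : a ^ (t-1) * a = a ^ t := by
        rw [← Real.rpow_add_one (ne_of_gt ha0) (t-1)]; ring_nf
      calc |a ^ t - b ^ t| * b ≤ (|t| * (2 ^ |t-1| * a ^ (t-1)) * d) * a := step2
        _ = |t| * 2 ^ |t-1| * (a ^ (t-1) * a) * d := by ring
        _ = |t| * 2 ^ |t-1| * a ^ t * d := by rw [hrw]
    have hKd : a ^ t * d ≤ 2 ^ |t| * (a+b)^t * d := mul_le_mul_of_nonneg_right hK hd0
    have hfinal : ‖(a ^ t • x : EuclideanSpace ℝ (Fin N)) - b ^ t • y‖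
        ≤ (1 + |t| * 2 ^ |t-1|) * (a ^ t * d) := by
      have hexp : a ^ t * d + |t| * 2 ^ |t-1| * a ^ t * d = (1 + |t| * 2 ^ |t-1|) * (a ^ t * d) := by ring
      linarith
    have hcoef : (1 + |t| * 2 ^ |t-1|) * (a ^ t * d) ≤
        2 ^ |t| * (4 + |t| * 2 ^ |t-1|) * (a+b)^t * d := by
      have h8 : (0:ℝ) ≤ |t| * 2 ^ |t-1| := by positivity
      have h9 : (1 + |t| * 2 ^ |t-1|) * (a ^ t * d) ≤ (1 + |t| * 2 ^ |t-1|) * (2 ^ |t| * (a+b)^t * d) := by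
        apply mul_le_mul_of_nonneg_left hKd (by linarith)
      have h12 : (0:ℝ) < (2:ℝ) ^ |t| := Real.rpow_pos_of_pos (by norm_num) _
      have h11 : (0:ℝ) ≤ (a+b)^t * d := mul_nonneg habt0 hd0
      nlinarith
    linarith

/-- Local Lipschitz-type bound for the `p`-Laplacian vector field for `p > 1`:
`| |x|^{p-2} x − |y|^{p-2} y | ≤ C (|x| + |y|)^{p-2} |x − y|`. -/
theorem pLaplacian_continuity_bound (N : ℕ) (p : ℝ) (hp : 1 < p) :
    ∃ C : ℝ, 0 < C ∧ ∀ x y : EuclideanSpace ℝ (Fin N),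
      ‖(‖x‖ ^ (p - 2) • x : EuclideanSpace ℝ (Fin N)) - ‖y‖ ^ (p - 2) • y‖ ≤
        C * (‖x‖ + ‖y‖) ^ (p - 2) * ‖x - y‖ := by
  refine ⟨(2 : ℝ) ^ |p-2| * (4 + |p-2| * 2 ^ |p-2-1|), by positivity, fun x y => ?_⟩
  rcases le_total ‖y‖ ‖x‖ with h | h
  · exact pLap_key_s2 N p hp x y h
  · have := pLap_key_s2 N p hp y x h
    rw [norm_sub_rev, norm_sub_rev y x] at this
    calc ‖(‖x‖ ^ (p - 2) • x : EuclideanSpace ℝ (Fin N)) - ‖y‖ ^ (p - 2) • y‖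
        ≤ 2 ^ |p-2| * (4 + |p-2| * 2 ^ |p-2-1|) * (‖y‖ + ‖x‖) ^ (p-2) * ‖x - y‖ := this
      _ = _ := by rw [add_comm ‖y‖ ‖x‖]
end
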